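/- For all complex polynomials f and g, ⟨f' + 3·i·t·z²·f, g⟩ = −a·⟨f, z·g⟩, where f' denotes the derivative of f and z·g denotes the polynomial g multiplied by the variable. -/

import Mathlib

open MeasureTheory Polynomial Complex

/-- The density `exp(-a|z|² + i t (z³ + conj(z)³))`. -/
noncomputable def cubicDensity (a t : ℝ) (z : ℂ) : ℂ :=
  Complex.exp (-(a : ℂ) * ((‖z‖ : ℝ) : ℂ) ^ 2 +
    Complex.I * (t : ℂ) * (z ^ 3 + (starRingEnd ℂ) z ^ 3))

/-- The pairing `⟨f,g⟩ = ∫_ℂ f(z) conj(g(-z)) exp(-a|z|² + i t (z³ + conj(z)³)) dx dy`. -/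
noncomputable def cubicPairing (a t : ℝ) (f g : Polynomial ℂ) : ℂ :=
  ∫ z : ℂ, f.eval z * (starRingEnd ℂ) (g.eval (-z)) * cubicDensity a t z

noncomputable def phiC (a t : ℝ) (z : ℂ) : ℂ :=
  -(a : ℂ) * (z * star z) + Complex.I * (t : ℂ) * (z ^ 3 + (star z) ^ 3)

lemma cubicDensity_eq (a t : ℝ) (z : ℂ) :
    cubicDensity a t z = Complex.exp (phiC a t z) := by
  unfold cubicDensity phiC
  congr 1
  simp only [Complex.star_def]
  rw [Complex.mul_conj, ← Complex.sq_norm]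
  push_cast
  ring

lemma norm_exp_phi (a t : ℝ) (z : ℂ) : ‖Complex.exp (phiC a t z)‖ = Real.exp (-a * ‖z‖^2) := by
  rw [Complex.norm_exp]
  congr 1
  unfold phiC
  have h1 : z * star z = ((Complex.normSq z : ℝ) : ℂ) := Complex.mul_conj z
  have h2 : (star z : ℂ) ^ 3 = (starRingEnd ℂ) (z ^ 3) := by
    rw [← star_pow, Complex.star_def]
  rw [h1, h2]
  have h3 : z ^ 3 + (starRingEnd ℂ) (z ^ 3) = ((2 * (z ^ 3).re : ℝ) : ℂ) := by
    rw [Complex.add_conj]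
  rw [h3]
  simp [Complex.add_re, Complex.mul_re, Complex.sq_norm]

lemma poly_norm_bound (p : Polynomial ℂ) :
    ∃ C : ℝ, 0 ≤ C ∧ ∀ z : ℂ, ‖p.eval z‖ ≤ C * (1 + ‖z‖^2)^p.natDegree := by
  refine ⟨∑ i ∈ Finset.range (p.natDegree + 1), ‖p.coeff i‖,
    Finset.sum_nonneg fun _ _ => norm_nonneg _, fun z => ?_⟩
  have hz : (0:ℝ) ≤ ‖z‖ := norm_nonneg z
  have hbase : (1:ℝ) ≤ 1 + ‖z‖^2 := by nlinarith
  calc ‖p.eval z‖ = ‖∑ i ∈ Finset.range (p.natDegree + 1), p.coeff i * z ^ i‖ := by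
        rw [Polynomial.eval_eq_sum_range]
    _ ≤ ∑ i ∈ Finset.range (p.natDegree + 1), ‖p.coeff i * z ^ i‖ := norm_sum_le _ _
    _ ≤ ∑ i ∈ Finset.range (p.natDegree + 1), ‖p.coeff i‖ * (1 + ‖z‖^2)^p.natDegree := by
        apply Finset.sum_le_sum
        intro i hi
        rw [norm_mul, norm_pow]
        apply mul_le_mul_of_nonneg_left _ (norm_nonneg _)
        calc ‖z‖ ^ i ≤ (1 + ‖z‖^2) ^ i := by
              apply pow_le_pow_left₀ hz; nlinarith
          _ ≤ (1 + ‖z‖^2) ^ p.natDegree :=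
              pow_le_pow_right₀ hbase (by simp at hi; omega)
    _ ≤ _ := le_of_eq (Finset.sum_mul ..).symm

lemma continuous_phiC (a t : ℝ) : Continuous (phiC a t) := by
  unfold phiC
  fun_prop

lemma integrable_gauss_base {c : ℝ} (hc : 0 < c) :
    Integrable (fun z : ℂ => Real.exp (-c * ‖z‖^2)) := by
  have h1 : Integrable (fun x : ℝ => Real.exp (-c * x^2)) := integrable_exp_neg_mul_sq hc
  have h3 := (Complex.volume_preserving_equiv_real_prod.symm).integrable_comp_emb
      (MeasurableEquiv.measurableEmbedding _) (g := fun z : ℂ => Real.exp (-c * ‖z‖^2))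
  rw [← h3]
  apply (h1.mul_prod h1).congr
  filter_upwards with p
  simp only [Function.comp, Complex.measurableEquivRealProd_symm_apply]
  rw [← Real.exp_add, Complex.sq_norm]
  simp [Complex.normSq_mk]
  ring_nf

lemma integrable_master {a : ℝ} (t : ℝ) (ha : 0 < a) (p q : Polynomial ℂ) :
    Integrable (fun z : ℂ =>
      p.eval z * (starRingEnd ℂ) (q.eval z) * Complex.exp (phiC a t z)) := by
  obtain ⟨Cp, hCp, hp⟩ := poly_norm_bound p
  obtain ⟨Cq, hCq, hq⟩ := poly_norm_bound q
  set N := p.natDegree + q.natDegree with hN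
  set K := Cp * Cq * ((N.factorial : ℝ) * (2/a)^N * Real.exp (a/2)) with hK
  have base := (integrable_gauss_base (show (0:ℝ) < a/2 by linarith)).const_mul K
  apply Integrable.mono' base
  · apply Continuous.aestronglyMeasurable
    exact ((p.continuous.mul (Complex.continuous_conj.comp q.continuous)).mul
      (Complex.continuous_exp.comp (continuous_phiC a t)))
  · filter_upwards with z
    have hz : (0:ℝ) ≤ ‖z‖^2 := by positivity
    have hconj : ‖(starRingEnd ℂ) (q.eval z)‖ = ‖q.eval z‖ := by
      simp
    rw [norm_mul, norm_mul, norm_exp_phi, hconj]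
    have h1 : ‖p.eval z‖ * ‖q.eval z‖ ≤ Cp * Cq * (1 + ‖z‖^2)^N := by
      calc ‖p.eval z‖ * ‖q.eval z‖ ≤
          (Cp * (1 + ‖z‖^2)^p.natDegree) * (Cq * (1 + ‖z‖^2)^q.natDegree) :=
            mul_le_mul (hp z) (hq z) (norm_nonneg _) (by positivity)
        _ = Cp * Cq * (1 + ‖z‖^2)^N := by rw [hN, pow_add]; ring
    have hfac : (0:ℝ) < (N.factorial : ℝ) := by positivity
    have hy : (0:ℝ) ≤ (a/2) * (1 + ‖z‖^2) := by positivity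
    have hkey := Real.pow_div_factorial_le_exp _ hy N
    have e1 : ((a/2) * (1 + ‖z‖^2))^N ≤ (N.factorial : ℝ) * Real.exp ((a/2) * (1 + ‖z‖^2)) := by
      rw [div_le_iff₀ hfac] at hkey
      linarith [hkey]
    have e2 : (1 + ‖z‖^2)^N = (2/a)^N * ((a/2) * (1 + ‖z‖^2))^N := by
      rw [← mul_pow]
      congr 1
      field_simp
    have e3 : Real.exp ((a/2) * (1 + ‖z‖^2)) = Real.exp (a/2) * Real.exp ((a/2) * ‖z‖^2) := by
      rw [← Real.exp_add]; congr 1; ring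
    have h2 : (1 + ‖z‖^2)^N ≤
        (N.factorial : ℝ) * (2/a)^N * Real.exp (a/2) * Real.exp ((a/2) * ‖z‖^2) := by
      rw [e2]
      calc (2/a)^N * ((a/2) * (1 + ‖z‖^2))^N
          ≤ (2/a)^N * ((N.factorial : ℝ) * Real.exp ((a/2) * (1 + ‖z‖^2))) :=
            mul_le_mul_of_nonneg_left e1 (by positivity)
        _ = (N.factorial : ℝ) * (2/a)^N * Real.exp (a/2) * Real.exp ((a/2) * ‖z‖^2) := by
            rw [e3]; ring
    have hexp : Real.exp ((a/2) * ‖z‖^2) * Real.exp (-a * ‖z‖^2) =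
        Real.exp (-(a/2) * ‖z‖^2) := by
      rw [← Real.exp_add]; congr 1; ring
    calc ‖p.eval z‖ * ‖q.eval z‖ * Real.exp (-a * ‖z‖^2)
        ≤ (Cp * Cq * (1 + ‖z‖^2)^N) * Real.exp (-a * ‖z‖^2) :=
          mul_le_mul_of_nonneg_right h1 (Real.exp_nonneg _)
      _ ≤ (Cp * Cq * ((N.factorial : ℝ) * (2/a)^N * Real.exp (a/2) *
            Real.exp ((a/2) * ‖z‖^2))) * Real.exp (-a * ‖z‖^2) := by
          apply mul_le_mul_of_nonneg_right _ (Real.exp_nonneg _)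
          apply mul_le_mul_of_nonneg_left _ (by positivity : (0:ℝ) ≤ Cp * Cq)
          calc (1 + ‖z‖^2)^N ≤ (N.factorial : ℝ) * (2/a)^N * Real.exp (a/2) *
              Real.exp ((a/2) * ‖z‖^2) := h2
            _ = (N.factorial : ℝ) * (2/a)^N * Real.exp (a/2) * Real.exp ((a/2) * ‖z‖^2) := rfl
      _ = K * Real.exp (-(a/2) * ‖z‖^2) := by
          rw [hK, ← hexp]; ring

lemma hasDerivAt_eval_comp (p : Polynomial ℂ) {w : ℝ → ℂ} {w' : ℂ} {s : ℝ}
    (hw : HasDerivAt w w' s) :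
    HasDerivAt (fun u => p.eval (w u)) ((derivative p).eval (w s) * w') s := by
  have h := ((p.hasDerivAt (w s)).hasFDerivAt.restrictScalars ℝ).comp_hasDerivAt s hw
  simpa [mul_comm, Function.comp_def] using h

noncomputable def Dfun (a t : ℝ) (f g : Polynomial ℂ) (v z : ℂ) : ℂ :=
  ((derivative f).eval z * v * star (g.eval (-z))
    - f.eval z * (star ((derivative g).eval (-z)) * star v)
    + f.eval z * star (g.eval (-z)) *
      (-(a:ℂ) * (v * star z + z * star v)
        + Complex.I * (t:ℂ) * (3 * z^2 * v + 3 * (star z)^2 * star v)))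
    * Complex.exp (phiC a t z)

lemma lineDeriv_G (a t : ℝ) (f g : Polynomial ℂ) (v z : ℂ) :
    HasLineDerivAt ℝ
      (fun z => f.eval z * star (g.eval (-z)) * Complex.exp (phiC a t z))
      (Dfun a t f g v z) z v := by
  have hw : HasDerivAt (fun s : ℝ => z + s • v) v 0 := by
    simpa using ((hasDerivAt_id (0:ℝ)).smul_const v).const_add z
  have hwn : HasDerivAt (fun s : ℝ => -(z + s • v)) (-v) 0 := hw.neg
  have hwc : HasDerivAt (fun s : ℝ => star (z + s • v)) (star v) 0 := hw.star
  have h1 := hasDerivAt_eval_comp f hw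
  have h2' := hasDerivAt_eval_comp g hwn
  have h2 := h2'.star
  have hcube : HasDerivAt (fun s : ℝ => (z + s • v)^3)
      (v * ((z + (0:ℝ) • v) * (z + (0:ℝ) • v)) +
        (z + (0:ℝ) • v) * (v * (z + (0:ℝ) • v) + (z + (0:ℝ) • v) * v)) 0 := by
    have h := hw.mul (hw.mul hw)
    have e : (fun s : ℝ => (z + s • v)^3) =
        fun s : ℝ => (z + s • v) * ((z + s • v) * (z + s • v)) := by
      funext s; ring
    rw [e]; exact h
  have hcubec : HasDerivAt (fun s : ℝ => (star (z + s • v))^3)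
      (star v * (star (z + (0:ℝ) • v) * star (z + (0:ℝ) • v)) +
        star (z + (0:ℝ) • v) * (star v * star (z + (0:ℝ) • v) +
          star (z + (0:ℝ) • v) * star v)) 0 := by
    have h := hwc.mul (hwc.mul hwc)
    have e : (fun s : ℝ => (star (z + s • v))^3) =
        fun s : ℝ => star (z + s • v) * (star (z + s • v) * star (z + s • v)) := by
      funext s; ring
    rw [e]; exact h
  have hphi := (((hw.mul hwc).const_mul (-(a:ℂ))).add
      ((hcube.add hcubec).const_mul (Complex.I * (t:ℂ))))
  have hexp := hphi.cexp
  have hmain := (h1.mul h2).mul hexp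
  show HasDerivAt _ _ _
  convert hmain using 1
  · rfl
  · rfl
  simp only [zero_smul, add_zero, star_mul', star_neg, Dfun, phiC, Pi.mul_apply, Pi.add_apply]
  ring

lemma integrable_G {a : ℝ} (t : ℝ) (ha : 0 < a) (f g : Polynomial ℂ) :
    Integrable (fun z : ℂ =>
      f.eval z * star (g.eval (-z)) * Complex.exp (phiC a t z)) := by
  apply (integrable_master t ha f (g.comp (-X))).congr
  filter_upwards with z
  simp [eval_comp, Complex.star_def]

lemma integrable_Dfun {a : ℝ} (t : ℝ) (ha : 0 < a) (f g : Polynomial ℂ) (v : ℂ) :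
    Integrable (Dfun a t f g v) := by
  have m1 := (integrable_master t ha (derivative f) (g.comp (-X))).const_mul v
  have m2 := (integrable_master t ha f ((derivative g).comp (-X))).const_mul (star v)
  have m3 := (integrable_master t ha f (X * g.comp (-X))).const_mul (-(a:ℂ) * v)
  have m4 := (integrable_master t ha (X * f) (g.comp (-X))).const_mul (-(a:ℂ) * star v)
  have m5 := (integrable_master t ha (X^2 * f) (g.comp (-X))).const_mul (3 * Complex.I * t * v)
  have m6 := (integrable_master t ha f (X^2 * g.comp (-X))).const_mul (3 * Complex.I * t * star v)
  apply ((((((m1.sub m2).add m3).add m4).add m5).add m6)).congr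
  filter_upwards with z
  simp only [Dfun, eval_comp, eval_mul, eval_pow, eval_neg, eval_X, map_mul, map_pow, map_neg,
    Complex.star_def, Pi.add_apply, Pi.sub_apply]
  ring

lemma integral_Dfun_eq_zero {a : ℝ} (t : ℝ) (ha : 0 < a) (f g : Polynomial ℂ) (v : ℂ) :
    ∫ z : ℂ, Dfun a t f g v z = 0 := by
  have hG := integrable_G t ha f g
  have hD := integrable_Dfun t ha f g v
  have hone : ∀ x : ℂ, HasLineDerivAt ℝ (fun _ : ℂ => (1:ℂ)) 0 x v := by
    intro x
    show HasDerivAt _ _ _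
    exact hasDerivAt_const 0 1
  have key := integral_bilinear_hasLineDerivAt_right_eq_neg_left_of_integrable
    (μ := (volume : Measure ℂ)) (B := ContinuousLinearMap.mul ℝ ℂ)
    (f := fun z => f.eval z * star (g.eval (-z)) * Complex.exp (phiC a t z))
    (f' := Dfun a t f g v) (g := fun _ => (1:ℂ)) (g' := fun _ => (0:ℂ)) (v := v)
    (by simpa using hD) (by simpa using (integrable_zero _ _ _)) (by simpa using hG)
    (fun z _ => lineDeriv_G a t f g v z) (fun x _ => hone x)
  simpa using key.symm

theorem stmt_2 (a t : ℝ) (ha : 0 < a) (f g : Polynomial ℂ) :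
    cubicPairing a t (derivative f + C (3 * Complex.I * (t : ℂ)) * X ^ 2 * f) g =
      -(a : ℂ) * cubicPairing a t f (X * g) := by
  have hL : Integrable (fun z : ℂ =>
      (derivative f + C (3 * Complex.I * (t : ℂ)) * X ^ 2 * f).eval z *
        (starRingEnd ℂ) (g.eval (-z)) * Complex.exp (phiC a t z)) := by
    apply (integrable_master t ha
      (derivative f + C (3 * Complex.I * (t:ℂ)) * X^2 * f) (g.comp (-X))).congr
    filter_upwards with z
    simp [eval_comp]
  have hR : Integrable (fun z : ℂ =>
      f.eval z * (starRingEnd ℂ) ((X*g).eval (-z)) * Complex.exp (phiC a t z)) := by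
    apply (integrable_master t ha f ((X*g).comp (-X))).congr
    filter_upwards with z
    simp [eval_comp]
  have hD1 := integrable_Dfun t ha f g 1
  have hDI := integrable_Dfun t ha f g Complex.I
  have z1 := integral_Dfun_eq_zero t ha f g 1
  have zI := integral_Dfun_eq_zero t ha f g Complex.I
  have hpt : ∀ z : ℂ,
      (derivative f + C (3 * Complex.I * (t:ℂ)) * X^2 * f).eval z *
          (starRingEnd ℂ) (g.eval (-z)) * Complex.exp (phiC a t z)
        = (1/2 : ℂ) * Dfun a t f g 1 z - (Complex.I/2) * Dfun a t f g Complex.I z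
          - (a:ℂ) * (f.eval z * (starRingEnd ℂ) ((X*g).eval (-z)) *
              Complex.exp (phiC a t z)) := by
    intro z
    simp only [Dfun, eval_add, eval_mul, eval_pow, eval_X, eval_C, map_mul, map_neg, map_one,
      Complex.star_def, Complex.conj_I, map_ofNat, Complex.conj_ofReal, one_mul, mul_one,
      star_one, eval_ofNat]
    ring_nf
    simp only [Complex.I_sq, show (Complex.I:ℂ)^3 = -Complex.I by
      rw [pow_succ, Complex.I_sq]; ring]
    ring
  unfold cubicPairing
  simp only [cubicDensity_eq]
  rw [integral_congr_ae (Filter.Eventually.of_forall hpt)]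
  have i1 : Integrable (fun z : ℂ => (1/2:ℂ) * Dfun a t f g 1 z) := hD1.const_mul _
  have i2 : Integrable (fun z : ℂ => (Complex.I/2) * Dfun a t f g Complex.I z) :=
    hDI.const_mul _
  have i3 : Integrable (fun z : ℂ => (a:ℂ) * (f.eval z * (starRingEnd ℂ) ((X*g).eval (-z)) *
      Complex.exp (phiC a t z))) := hR.const_mul _
  have i12 : Integrable (fun z : ℂ => (1/2:ℂ) * Dfun a t f g 1 z -
      (Complex.I/2) * Dfun a t f g Complex.I z) := i1.sub i2
  rw [integral_sub i12 i3, integral_sub i1 i2,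
    integral_const_mul, integral_const_mul, integral_const_mul, z1, zI]
  ring
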